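/- Let X be a strictly convex real Banach space having the Kadec-Klee property, and let (A,B) be a pair of nonempty closed bounded convex subsets of X that is weak approximatively compact. Then (A,B) has property UC. -/

import Mathlib

open Filter Topology

variable {X : Type*} [NormedAddCommGroup X] [NormedSpace ℝ X]

/-- The distance between two sets: `d(A,B) = inf {‖x−y‖ : x ∈ A, y ∈ B}`. -/
noncomputable def setD (A B : Set X) : ℝ :=
  sInf {r : ℝ | ∃ x ∈ A, ∃ y ∈ B, r = ‖x - y‖}

/-- The diameter-type quantity `δ(A,B) = sup {‖x−y‖ : x ∈ A, y ∈ B}`. -/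
noncomputable def setDelta (A B : Set X) : ℝ :=
  sSup {r : ℝ | ∃ x ∈ A, ∃ y ∈ B, r = ‖x - y‖}

/-- `d(z,B) = inf {‖z−y‖ : y ∈ B}`. -/
noncomputable def ptD (z : X) (B : Set X) : ℝ :=
  sInf {r : ℝ | ∃ y ∈ B, r = ‖z - y‖}

/-- `δ(z,B) = sup {‖z−y‖ : y ∈ B}`. -/
noncomputable def ptDelta (z : X) (B : Set X) : ℝ :=
  sSup {r : ℝ | ∃ y ∈ B, r = ‖z - y‖}

/-- A pair `(A,B)` is semisharp proximal. -/
def SemisharpProximal (A B : Set X) : Prop :=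
  (∀ x ∈ A, ∀ y ∈ B, ∀ z ∈ B, ‖x - y‖ = setD A B → ‖x - z‖ = setD A B → y = z) ∧
  (∀ y ∈ B, ∀ x ∈ A, ∀ z ∈ A, ‖x - y‖ = setD A B → ‖z - y‖ = setD A B → x = z)

/-- The pair `(A,B)` has property UC. -/
def PropertyUC (A B : Set X) : Prop :=
  ∀ x y z : ℕ → X, (∀ n, x n ∈ A) → (∀ n, y n ∈ A) → (∀ n, z n ∈ B) →
    Tendsto (fun n => ‖x n - z n‖) atTop (𝓝 (setD A B)) →
    Tendsto (fun n => ‖y n - z n‖) atTop (𝓝 (setD A B)) →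
    Tendsto (fun n => ‖x n - y n‖) atTop (𝓝 (0 : ℝ))

/-- Weak convergence of a sequence. -/
def WeakConv (u : ℕ → X) (x : X) : Prop :=
  ∀ f : X →L[ℝ] ℝ, Tendsto (fun n => f (u n)) atTop (𝓝 (f x))

/-- The Kadec-Klee property of a normed space. -/
def KadecKleeProp (X : Type*) [NormedAddCommGroup X] [NormedSpace ℝ X] : Prop :=
  ∀ (u : ℕ → X) (x : X), WeakConv u x →
    Tendsto (fun n => ‖u n‖) atTop (𝓝 ‖x‖) → Tendsto u atTop (𝓝 x)

/-- `A` is weak approximatively compact with respect to `B`. -/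
def WeakApproxCompactWrt (A B : Set X) : Prop :=
  ∀ u : ℕ → X, (∀ n, u n ∈ A) →
    Tendsto (fun n => ptD (u n) B) atTop (𝓝 (setD A B)) →
    ∃ a ∈ A, ∃ φ : ℕ → ℕ, StrictMono φ ∧ WeakConv (u ∘ φ) a

/-- `A₀`, the set of points of `A` that realize the distance `d(A,B)`. -/
def proxA (A B : Set X) : Set X := {x ∈ A | ∃ y ∈ B, ‖x - y‖ = setD A B}

/-- `B₀`, the set of points of `B` that realize the distance `d(A,B)`. -/
def proxB (A B : Set X) : Set X := {y ∈ B | ∃ x ∈ A, ‖x - y‖ = setD A B}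

/-- The pair `(A,B)` is proximal: `A = A₀` and `B = B₀`. -/
def ProximalPair (A B : Set X) : Prop := A = proxA A B ∧ B = proxB A B

/-- `r(H₁,H₂) = inf {δ(x,H₂) : x ∈ H₁}`. -/
noncomputable def rr (H1 H2 : Set X) : ℝ := sInf {t : ℝ | ∃ x ∈ H1, t = ptDelta x H2}

/-- `R(H₁,H₂) = max {r(H₁,H₂), r(H₂,H₁)}`. -/
noncomputable def RR (H1 H2 : Set X) : ℝ := max (rr H1 H2) (rr H2 H1)

/-- `(H₁,H₂) ∈ Υ(A,B)`: nonempty closed bounded convex proximal sub-pairs of `(A,B)` at the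
same distance, with at least one of the two sets containing more than one point. -/
def Upsilon (A B H1 H2 : Set X) : Prop :=
  H1 ⊆ A ∧ H2 ⊆ B ∧ H1.Nonempty ∧ H2.Nonempty ∧ IsClosed H1 ∧ IsClosed H2 ∧
    Bornology.IsBounded H1 ∧ Bornology.IsBounded H2 ∧ Convex ℝ H1 ∧ Convex ℝ H2 ∧
    ProximalPair H1 H2 ∧ (¬ H1.Subsingleton ∨ ¬ H2.Subsingleton) ∧
    setD H1 H2 = setD A B

/-- `N(A,B) = sup {R(H₁,H₂)/δ(H₁,H₂) : (H₁,H₂) ∈ Υ(A,B)}`. -/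
noncomputable def NN (A B : Set X) : ℝ :=
  sSup {t : ℝ | ∃ H1 H2 : Set X, Upsilon A B H1 H2 ∧ t = RR H1 H2 / setDelta H1 H2}

/-- `(C₁,C₂) ∈ Ῡ(A,B)`: as `Υ(A,B)` but without requiring proximality. -/
def UpsilonBar (A B C1 C2 : Set X) : Prop :=
  C1 ⊆ A ∧ C2 ⊆ B ∧ C1.Nonempty ∧ C2.Nonempty ∧ IsClosed C1 ∧ IsClosed C2 ∧
    Bornology.IsBounded C1 ∧ Bornology.IsBounded C2 ∧ Convex ℝ C1 ∧ Convex ℝ C2 ∧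
    (¬ C1.Subsingleton ∨ ¬ C2.Subsingleton) ∧ setD C1 C2 = setD A B

/-- `c₀ = sup {R(C₁,C₂)/δ(C₁,C₂) : (C₁,C₂) ∈ Ῡ(A,B)}`. -/
noncomputable def cZero (A B : Set X) : ℝ :=
  sSup {t : ℝ | ∃ C1 C2 : Set X, UpsilonBar A B C1 C2 ∧ t = RR C1 C2 / setDelta C1 C2}

/-- `T` is a cyclic relatively nonexpansive mapping on `A ∪ B`. -/
def CyclicRelNonexpansive (A B : Set X) (T : X → X) : Prop :=
  Set.MapsTo T A B ∧ Set.MapsTo T B A ∧ ∀ x ∈ A, ∀ y ∈ B, ‖T x - T y‖ ≤ ‖x - y‖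


section helpers
variable {X : Type*} [NormedAddCommGroup X] [NormedSpace ℝ X]

private lemma setD_bdd (A B : Set X) :
    BddBelow {r : ℝ | ∃ x ∈ A, ∃ y ∈ B, r = ‖x - y‖} :=
  ⟨0, by rintro r ⟨x, _, y, _, rfl⟩; exact norm_nonneg _⟩

private lemma setD_le' {A B : Set X} {x y : X} (hx : x ∈ A) (hy : y ∈ B) :
    setD A B ≤ ‖x - y‖ :=
  csInf_le (setD_bdd A B) ⟨x, hx, y, hy, rfl⟩

private lemma setD_comm' (A B : Set X) : setD B A = setD A B := by
  unfold setD
  congr 1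
  ext r
  constructor <;> rintro ⟨x, hx, y, hy, rfl⟩ <;>
    exact ⟨y, hy, x, hx, (norm_sub_rev _ _)⟩

private lemma ptD_le' {B : Set X} {z y : X} (hy : y ∈ B) : ptD z B ≤ ‖z - y‖ :=
  csInf_le ⟨0, by rintro r ⟨y, _, rfl⟩; exact norm_nonneg _⟩ ⟨y, hy, rfl⟩

private lemma setD_le_ptD' {A B : Set X} {z : X} (hz : z ∈ A) (hBne : B.Nonempty) :
    setD A B ≤ ptD z B := by
  obtain ⟨y0, hy0⟩ := hBne
  refine le_csInf ⟨‖z - y0‖, y0, hy0, rfl⟩ ?_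
  rintro r ⟨y, hy, rfl⟩
  exact setD_le' hz hy

/-- Weak lower semicontinuity of the norm, in the special case of converging norms. -/
private lemma weak_norm_le {u : ℕ → X} {x : X} (h : WeakConv u x) {L : ℝ}
    (hL : Tendsto (fun n => ‖u n‖) atTop (𝓝 L)) : ‖x‖ ≤ L := by
  rcases eq_or_ne x 0 with rfl | hx
  · simpa using ge_of_tendsto' hL fun n => norm_nonneg _
  · obtain ⟨f, hf1, hfx⟩ := exists_dual_vector ℝ x (norm_ne_zero_iff.mpr hx)
    have hfl : Tendsto (fun n => f (u n)) atTop (𝓝 ‖x‖) := by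
      simpa [hfx] using h f
    refine le_of_tendsto_of_tendsto' hfl hL fun n => ?_
    calc f (u n) ≤ ‖f (u n)‖ := le_abs_self _
    _ ≤ ‖f‖ * ‖u n‖ := f.le_opNorm _
    _ = ‖u n‖ := by rw [hf1, one_mul]

private lemma core_lemma [CompleteSpace X] [StrictConvexSpace ℝ X]
    (hKK : KadecKleeProp X)
    (A B : Set X) (hBne : B.Nonempty)
    (hAcv : Convex ℝ A)
    (hwacA : WeakApproxCompactWrt A B) (hwacB : WeakApproxCompactWrt B A)
    (x y z : ℕ → X) (hx : ∀ n, x n ∈ A) (hy : ∀ n, y n ∈ A) (hz : ∀ n, z n ∈ B)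
    (hxz : Tendsto (fun n => ‖x n - z n‖) atTop (𝓝 (setD A B)))
    (hyz : Tendsto (fun n => ‖y n - z n‖) atTop (𝓝 (setD A B))) :
    ∃ φ : ℕ → ℕ, Tendsto (fun n => ‖x (φ n) - y (φ n)‖) atTop (𝓝 (0 : ℝ)) := by
  set d := setD A B with hd
  have hAne : A.Nonempty := ⟨x 0, hx 0⟩
  -- midpoint sequence
  set w : ℕ → X := fun n => (1/2 : ℝ) • x n + (1/2 : ℝ) • y n with hw
  have hwA : ∀ n, w n ∈ A := fun n =>
    hAcv (hx n) (hy n) (by norm_num) (by norm_num) (by norm_num)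
  have hwz : Tendsto (fun n => ‖w n - z n‖) atTop (𝓝 d) := by
    have hub : ∀ n, ‖w n - z n‖ ≤ (1/2 : ℝ) * ‖x n - z n‖ + (1/2 : ℝ) * ‖y n - z n‖ := by
      intro n
      have : w n - z n = (1/2 : ℝ) • (x n - z n) + (1/2 : ℝ) • (y n - z n) := by
        simp [hw, smul_sub]; module
      rw [this]
      calc ‖(1/2 : ℝ) • (x n - z n) + (1/2 : ℝ) • (y n - z n)‖
          ≤ ‖(1/2 : ℝ) • (x n - z n)‖ + ‖(1/2 : ℝ) • (y n - z n)‖ := norm_add_le _ _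
        _ = (1/2 : ℝ) * ‖x n - z n‖ + (1/2 : ℝ) * ‖y n - z n‖ := by
            simp [norm_smul]
    have hup : Tendsto (fun n => (1/2 : ℝ) * ‖x n - z n‖ + (1/2 : ℝ) * ‖y n - z n‖)
        atTop (𝓝 d) := by
      have := ((hxz.const_mul (1/2 : ℝ)).add (hyz.const_mul (1/2 : ℝ)))
      convert this using 2
      ring
    exact tendsto_of_tendsto_of_tendsto_of_le_of_le tendsto_const_nhds hup
      (fun n => setD_le' (hwA n) (hz n)) hub
  -- point-set distance limits
  have squeeze : ∀ (u : ℕ → X), (∀ n, u n ∈ A) →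
      Tendsto (fun n => ‖u n - z n‖) atTop (𝓝 d) →
      Tendsto (fun n => ptD (u n) B) atTop (𝓝 d) := fun u hu huz =>
    tendsto_of_tendsto_of_tendsto_of_le_of_le tendsto_const_nhds huz
      (fun n => setD_le_ptD' (hu n) hBne) (fun n => ptD_le' (hz n))
  have hptx := squeeze x hx hxz
  have hpty := squeeze y hy hyz
  have hptz : Tendsto (fun n => ptD (z n) A) atTop (𝓝 (setD B A)) := by
    rw [setD_comm']
    refine tendsto_of_tendsto_of_tendsto_of_le_of_le tendsto_const_nhds
      (hxz.congr fun n => (norm_sub_rev _ _)) ?_ ?_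
    · intro n; rw [← setD_comm']; exact setD_le_ptD' (hz n) hAne
    · intro n; exact ptD_le' (hx n)
  -- extract subsequences
  obtain ⟨a1, ha1, φ1, hφ1, hw1⟩ := hwacA x hx hptx
  obtain ⟨a2, ha2, φ2, hφ2, hw2⟩ :=
    hwacA (y ∘ φ1) (fun n => hy _) (hpty.comp hφ1.tendsto_atTop)
  obtain ⟨b, hb, φ3, hφ3, hw3⟩ :=
    hwacB (z ∘ φ1 ∘ φ2) (fun n => hz _) (hptz.comp (hφ1.comp hφ2).tendsto_atTop)
  set φ : ℕ → ℕ := φ1 ∘ φ2 ∘ φ3 with hφdef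
  have hφ : StrictMono φ := hφ1.comp (hφ2.comp hφ3)
  have hwxφ : WeakConv (fun n => x (φ n)) a1 :=
    fun f => (hw1 f).comp (hφ2.comp hφ3).tendsto_atTop
  have hwyφ : WeakConv (fun n => y (φ n)) a2 :=
    fun f => (hw2 f).comp hφ3.tendsto_atTop
  have hwzφ : WeakConv (fun n => z (φ n)) b := hw3
  have hxzφ : Tendsto (fun n => ‖x (φ n) - z (φ n)‖) atTop (𝓝 d) :=
    hxz.comp hφ.tendsto_atTop
  have hyzφ : Tendsto (fun n => ‖y (φ n) - z (φ n)‖) atTop (𝓝 d) :=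
    hyz.comp hφ.tendsto_atTop
  have hwzφ' : Tendsto (fun n => ‖w (φ n) - z (φ n)‖) atTop (𝓝 d) :=
    hwz.comp hφ.tendsto_atTop
  -- weak convergence of differences
  have hwd1 : WeakConv (fun n => x (φ n) - z (φ n)) (a1 - b) := fun f => by
    simpa [map_sub] using (hwxφ f).sub (hwzφ f)
  have hwd2 : WeakConv (fun n => y (φ n) - z (φ n)) (a2 - b) := fun f => by
    simpa [map_sub] using (hwyφ f).sub (hwzφ f)
  set m : X := (1/2 : ℝ) • a1 + (1/2 : ℝ) • a2 with hm
  have hmA : m ∈ A := hAcv ha1 ha2 (by norm_num) (by norm_num) (by norm_num)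
  have hwdm : WeakConv (fun n => w (φ n) - z (φ n)) (m - b) := fun f => by
    have h1 : Tendsto (fun n => (1/2 : ℝ) * f (x (φ n)) + (1/2 : ℝ) * f (y (φ n))
        - f (z (φ n))) atTop (𝓝 ((1/2 : ℝ) * f a1 + (1/2 : ℝ) * f a2 - f b)) :=
      (((hwxφ f).const_mul _).add ((hwyφ f).const_mul _)).sub (hwzφ f)
    convert h1 using 2 with n
    · simp [hw, map_sub, map_add, map_smul]
    · simp [hm, map_sub, map_add, map_smul]
  -- norms of weak limits equal d
  have key : ∀ (u : ℕ → X) (a : X), a ∈ A →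
      WeakConv (fun n => u n - z (φ n)) (a - b) →
      Tendsto (fun n => ‖u n - z (φ n)‖) atTop (𝓝 d) → ‖a - b‖ = d := by
    intro u a haA hwc hnc
    exact le_antisymm (weak_norm_le hwc hnc) (setD_le' haA hb)
  have e1 : ‖a1 - b‖ = d := key _ _ ha1 hwd1 hxzφ
  have e2 : ‖a2 - b‖ = d := key _ _ ha2 hwd2 hyzφ
  have em : ‖m - b‖ = d := key _ _ hmA hwdm hwzφ'
  -- strict convexity: a1 = a2
  have hsum : ‖(a1 - b) + (a2 - b)‖ = ‖a1 - b‖ + ‖a2 - b‖ := by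
    have h2 : (a1 - b) + (a2 - b) = (2 : ℝ) • (m - b) := by
      simp [hm, smul_sub, smul_add]; module
    rw [h2, norm_smul, e1, e2, em]
    simp
    ring
  have ha12 : a1 = a2 := by
    have := eq_of_norm_eq_of_norm_add_eq (e1.trans e2.symm) hsum
    have h := sub_left_injective this
    exact h
  -- Kadec-Klee: norm convergence
  have hc1 : Tendsto (fun n => x (φ n) - z (φ n)) atTop (𝓝 (a1 - b)) :=
    hKK _ _ hwd1 (by rwa [e1])
  have hc2 : Tendsto (fun n => y (φ n) - z (φ n)) atTop (𝓝 (a1 - b)) := by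
    rw [ha12]
    exact hKK _ _ hwd2 (by rwa [e2])
  refine ⟨φ, ?_⟩
  have := (hc1.sub hc2).norm
  simpa using this

end helpers

theorem stmt6 [CompleteSpace X] [StrictConvexSpace ℝ X]
    (hKK : KadecKleeProp X)
    (A B : Set X) (hAne : A.Nonempty) (hBne : B.Nonempty)
    (hAcl : IsClosed A) (hBcl : IsClosed B)
    (hAbd : Bornology.IsBounded A) (hBbd : Bornology.IsBounded B)
    (hAcv : Convex ℝ A) (hBcv : Convex ℝ B)
    (hwacA : WeakApproxCompactWrt A B) (hwacB : WeakApproxCompactWrt B A) :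
    PropertyUC A B := by
  
  intro x y z hx hy hz hxz hyz
  apply tendsto_of_subseq_tendsto
  intro ns hns
  obtain ⟨φ, hφ⟩ := core_lemma hKK A B hBne hAcv hwacA hwacB
    (x ∘ ns) (y ∘ ns) (z ∘ ns) (fun n => hx _) (fun n => hy _) (fun n => hz _)
    (hxz.comp hns) (hyz.comp hns)
  exact ⟨φ, hφ⟩
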